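/- Fix λ ∈ (0,1)^d with complements λ°_i = (1−λ_i)/s (s = d−1) and parameters η > 1, α = 1/η, t > 0, δ = (η t^{1/η}/s)(1 − 1/η). Then the function f(λ') = −∑_i λ°_i log((1−λ'_i)/t) + ∑_i λ°_i log λ°_i + (δ/(α−1))(1 − ∑_i ((1−λ'_i)/t)^α) has a critical point (∂f/∂λ'_i = 0) at λ'_i = 1 − t (η/(δ s))^η (1 − 1/η)^η (1 − λ_i)^η, which with the given δ simplifies to λ'_i = 1 − (1−λ_i)^η. -/

import Mathlib

open Real

theorem tso_shrinkage_critical_point {d : ℕ} (hd : 2 ≤ d)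
    (lam : Fin d → ℝ) (hlam : ∀ i, lam i ∈ Set.Ioo (0:ℝ) 1)
    (η : ℝ) (hη : 1 < η) (t : ℝ) (ht : 0 < t) :
    let s : ℝ := (d : ℝ) - 1
    let α : ℝ := 1 / η
    let δ : ℝ := (η * t ^ (1 / η) / s) * (1 - 1 / η)
    let lamc : Fin d → ℝ := fun i => (1 - lam i) / s
    let f : (Fin d → ℝ) → ℝ := fun l' =>
      (-(∑ i, lamc i * Real.log ((1 - l' i) / t)))
        + (∑ i, lamc i * Real.log (lamc i))
        + (δ / (α - 1)) * (1 - ∑ i, ((1 - l' i) / t) ^ α)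
    let critical : Fin d → ℝ := fun i =>
      1 - t * (η / (δ * s)) ^ η * (1 - 1 / η) ^ η * (1 - lam i) ^ η
    (∀ i, critical i = 1 - (1 - lam i) ^ η) ∧
      ∀ i, HasDerivAt (fun u => f (Function.update critical i u)) 0 (critical i) := by
  intro s α δ lamc f critical
  have hη0 : (0:ℝ) < η := lt_trans one_pos hη
  have hs : (0:ℝ) < s := by
    have h2 : (2:ℝ) ≤ (d:ℝ) := by exact_mod_cast hd
    show (0:ℝ) < (d:ℝ) - 1
    linarith
  have hB : (0:ℝ) < 1 - 1/η := by
    have h1 : 1/η < 1 := by rw [div_lt_one hη0]; exact hη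
    linarith
  have hT : (0:ℝ) < t ^ (1/η) := Real.rpow_pos_of_pos ht _
  have hδs : δ * s = η * t ^ (1/η) * (1 - 1/η) := by
    show ((η * t ^ (1/η) / s) * (1 - 1/η)) * s = _
    field_simp
  have hconst : t * (η / (δ * s)) ^ η * (1 - 1/η) ^ η = 1 := by
    rw [hδs]
    have h1 : η / (η * t ^ (1/η) * (1 - 1/η)) = (t ^ (1/η) * (1 - 1/η))⁻¹ := by
      rw [mul_assoc]
      exact div_mul_cancel_left₀ hη0.ne' _
    rw [h1, Real.inv_rpow (by positivity), Real.mul_rpow hT.le hB.le]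
    have h2 : (t ^ (1/η)) ^ η = t := by
      rw [← Real.rpow_mul ht.le, one_div_mul_cancel hη0.ne', Real.rpow_one]
    rw [h2]
    have hBη : (0:ℝ) < (1-1/η)^η := Real.rpow_pos_of_pos hB _
    rw [mul_inv, show t * (t⁻¹ * ((1-1/η)^η)⁻¹) * (1-1/η)^η
        = (t*t⁻¹) * (((1-1/η)^η)⁻¹ * (1-1/η)^η) from by ring,
      mul_inv_cancel₀ ht.ne', inv_mul_cancel₀ hBη.ne', mul_one]
  have hcrit : ∀ i, critical i = 1 - (1 - lam i) ^ η := by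
    intro i
    show 1 - t * (η / (δ * s)) ^ η * (1 - 1/η) ^ η * (1 - lam i) ^ η = _
    rw [hconst, one_mul]
  refine ⟨hcrit, ?_⟩
  intro i
  set x := 1 - lam i with hxdef
  have hx : 0 < x := by
    have := (hlam i).2
    rw [hxdef]; linarith
  have hxη : 0 < x ^ η := Real.rpow_pos_of_pos hx _
  have hu : 1 - critical i = x ^ η := by rw [hcrit i]; ring
  have hf_def : f = fun l' =>
      (-(∑ j, lamc j * Real.log ((1 - l' j) / t)))
        + (∑ j, lamc j * Real.log (lamc j))
        + (δ / (α - 1)) * (1 - ∑ j, ((1 - l' j) / t) ^ α) := rfl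
  have hsum : ∀ (g : Fin d → ℝ → ℝ) (u : ℝ),
      ∑ j, g j (Function.update critical i u j)
        = g i u + ∑ j ∈ Finset.univ \ {i}, g j (critical j) := by
    intro g u
    have h1 : ∀ j, g j (Function.update critical i u j)
        = Function.update (fun k => g k (critical k)) i (g i u) j :=
      fun j => Function.apply_update (fun k y => g k y) critical i u j
    rw [Finset.sum_congr rfl fun j _ => h1 j]
    exact Finset.sum_update_of_mem (Finset.mem_univ i) _ _
  set C₁ : ℝ := ∑ j ∈ Finset.univ \ {i}, lamc j * Real.log ((1 - critical j) / t) with hC₁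
  set K : ℝ := ∑ j, lamc j * Real.log (lamc j) with hK
  set C₂ : ℝ := ∑ j ∈ Finset.univ \ {i}, ((1 - critical j) / t) ^ α with hC₂
  have hGeq : (fun u => f (Function.update critical i u))
      = fun u => -((lamc i * Real.log ((1 - u) / t)) + C₁)
          + K + (δ / (α - 1)) * (1 - (((1 - u) / t) ^ α + C₂)) := by
    funext u
    simp only [hf_def]
    rw [hsum (fun j y => lamc j * Real.log ((1 - y) / t)) u,
        hsum (fun j y => ((1 - y) / t) ^ α) u]
  rw [hGeq]
  have hv : HasDerivAt (fun u : ℝ => (1 - u) / t) (-1 / t) (critical i) := by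
    have h1 : HasDerivAt (fun u : ℝ => 1 - u) (-1) (critical i) :=
      (hasDerivAt_id _).const_sub 1
    have := h1.div_const t
    convert this using 1
  have hv0 : (1 - critical i) / t ≠ 0 := by
    rw [hu]; positivity
  have Hlog : HasDerivAt (fun u : ℝ => Real.log ((1 - u) / t))
      ((-1 / t) / ((1 - critical i) / t)) (critical i) := hv.log hv0
  have Hrpow : HasDerivAt (fun u : ℝ => ((1 - u) / t) ^ α)
      (-1 / t * α * ((1 - critical i) / t) ^ (α - 1)) (critical i) :=
    hv.rpow_const (Or.inl hv0)
  have H1 : HasDerivAt (fun u : ℝ => -((lamc i * Real.log ((1 - u) / t)) + C₁)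
          + K + (δ / (α - 1)) * (1 - (((1 - u) / t) ^ α + C₂)))
      (-(lamc i * ((-1 / t) / ((1 - critical i) / t)))
        + (δ / (α - 1)) * -(-1 / t * α * ((1 - critical i) / t) ^ (α - 1)))
      (critical i) := by
    exact ((((Hlog.const_mul (lamc i)).add_const C₁).neg).add_const K).add
      ((((Hrpow.add_const C₂).const_sub 1)).const_mul (δ / (α - 1)))
  have hαdef : α = 1/η := rfl
  have hlamci : lamc i = x / s := rfl
  have hα1 : α - 1 ≠ 0 := by
    rw [hαdef]
    intro h
    have : (1:ℝ)/η = 1 := by linarith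
    linarith [hB]
  have hδdiv : δ / (α - 1) = -(η * t ^ (1/η) / s) := by
    have hδeq : δ = -(η * t ^ (1/η) / s) * (α - 1) := by
      show (η * t ^ (1/η) / s) * (1 - 1/η) = _
      rw [hαdef]; ring
    rw [hδeq, mul_div_assoc, div_self hα1, mul_one]
  have hDzero : (-(lamc i * ((-1 / t) / ((1 - critical i) / t)))
        + (δ / (α - 1)) * -(-1 / t * α * ((1 - critical i) / t) ^ (α - 1))) = 0 := by
    rw [hu, hlamci, hδdiv, hαdef]
    have hpow : ((x ^ η / t) : ℝ) ^ (1/η - 1) = (x / x ^ η) / (t ^ (1/η) / t) := by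
      rw [Real.div_rpow hxη.le ht.le, ← Real.rpow_mul hx.le]
      have hmul : η * (1/η - 1) = 1 - η := by
        field_simp
      rw [hmul, Real.rpow_sub hx, Real.rpow_one, Real.rpow_sub ht, Real.rpow_one]
    rw [hpow]
    field_simp
    ring
  rw [← hDzero]
  exact H1
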